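/- For dim V = 3 and the GL(V)-equivariant map φ: V → Hom(S_{(2,1)}V, S_{(2,2)}V), every nonzero v ∈ V gives a matrix φ_v of rank exactly 5; concretely, the 6×8 matrix M(x₁,x₂,x₃) with rows/columns as in the explicit presentation (whose entries are linear in x₁,x₂,x₃) has rank 5 for every (x₁,x₂,x₃) ≠ (0,0,0). -/
import Mathlib

open Matrix in
@[simp] lemma cons_val_five' {α : Type*} {m : ℕ} (x : α) (u : Fin (m+5) → α) :
    vecCons x u 5 = vecHead (vecTail (vecTail (vecTail (vecTail u)))) := rfl
open Matrix in
@[simp] lemma cons_val_six' {α : Type*} {m : ℕ} (x : α) (u : Fin (m+6) → α) :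
    vecCons x u 6 = vecHead (vecTail (vecTail (vecTail (vecTail (vecTail u))))) := rfl
open Matrix in
@[simp] lemma cons_val_seven' {α : Type*} {m : ℕ} (x : α) (u : Fin (m+7) → α) :
    vecCons x u 7 = vecHead (vecTail (vecTail (vecTail (vecTail (vecTail (vecTail u)))))) := rfl

/-- The explicit `6 × 8` matrix presentation of `φ_v` for
`φ : V → Hom(S_{(2,1)}V, S_{(2,2)}V)`, `dim V = 3`. -/
noncomputable def M (x₁ x₂ x₃ : ℂ) : Matrix (Fin 6) (Fin 8) ℂ :=
  !![x₂, 0, -x₁, 0, 0, 0, 0, 0;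
     x₃, x₂, 0, -x₁, -x₁, 0, 0, 0;
     0, x₃, 0, 0, 0, -x₁, 0, 0;
     0, 0, x₃, 0, -x₂, 0, -x₁, 0;
     0, 0, 0, x₃, 0, -x₂, 0, -x₁;
     0, 0, 0, 0, 0, 0, x₃, -x₂]

/-- Row-selection matrix. -/
noncomputable def P (r : Fin 5 → Fin 6) : Matrix (Fin 5) (Fin 6) ℂ :=
  Matrix.of fun i j => if r i = j then 1 else 0

/-- Column-selection matrix. -/
noncomputable def Q (c : Fin 5 → Fin 8) : Matrix (Fin 8) (Fin 5) ℂ :=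
  Matrix.of fun i j => if i = c j then 1 else 0

lemma sub_eq (A : Matrix (Fin 6) (Fin 8) ℂ) (r : Fin 5 → Fin 6) (c : Fin 5 → Fin 8) :
    A.submatrix r c = P r * A * Q c := by
  ext i j
  simp [Matrix.mul_apply, P, Q, Finset.sum_ite_eq, Finset.sum_ite_eq']

lemma rank_sub_le (A : Matrix (Fin 6) (Fin 8) ℂ) (r : Fin 5 → Fin 6) (c : Fin 5 → Fin 8) :
    (A.submatrix r c).rank ≤ A.rank := by
  rw [sub_eq]
  exact le_trans (Matrix.rank_mul_le_left _ _) (Matrix.rank_mul_le_right _ _)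

lemma rank_ge_of_det {x₁ x₂ x₃ : ℂ} (r : Fin 5 → Fin 6) (c : Fin 5 → Fin 8)
    (hd : ((M x₁ x₂ x₃).submatrix r c).det ≠ 0) : 5 ≤ (M x₁ x₂ x₃).rank := by
  have h1 : ((M x₁ x₂ x₃).submatrix r c).rank = 5 := by
    rw [Matrix.rank_of_isUnit _ (Matrix.isUnit_iff_isUnit_det _ |>.2 (Ne.isUnit hd))]
    simp
  calc (5:ℕ) = _ := h1.symm
    _ ≤ _ := rank_sub_le _ _ _

lemma det1 (x₁ x₂ x₃ : ℂ) :
    ((M x₁ x₂ x₃).submatrix ![0,1,2,3,4] ![2,3,5,6,7]).det = -x₁^5 := by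
  have : (M x₁ x₂ x₃).submatrix ![0,1,2,3,4] ![2,3,5,6,7] =
      !![-x₁,0,0,0,0; 0,-x₁,0,0,0; 0,0,-x₁,0,0; x₃,0,0,-x₁,0; 0,x₃,-x₂,0,-x₁] := by
    ext i j
    fin_cases i <;> fin_cases j <;> rfl
  rw [this]
  simp [Matrix.det_succ_row_zero, Fin.sum_univ_succ]
  ring

lemma det2 (x₁ x₂ x₃ : ℂ) :
    ((M x₁ x₂ x₃).submatrix ![0,1,3,4,5] ![0,1,4,5,7]).det = -x₂^5 := by
  have : (M x₁ x₂ x₃).submatrix ![0,1,3,4,5] ![0,1,4,5,7] =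
      !![x₂,0,0,0,0; x₃,x₂,-x₁,0,0; 0,0,-x₂,0,0; 0,0,0,-x₂,-x₁; 0,0,0,0,-x₂] := by
    ext i j
    fin_cases i <;> fin_cases j <;> rfl
  rw [this]
  simp [Matrix.det_succ_row_zero, Fin.sum_univ_succ]
  ring

lemma det3 (x₁ x₂ x₃ : ℂ) :
    ((M x₁ x₂ x₃).submatrix ![1,2,3,4,5] ![0,1,2,3,6]).det = x₃^5 := by
  have : (M x₁ x₂ x₃).submatrix ![1,2,3,4,5] ![0,1,2,3,6] =
      !![x₃,x₂,0,-x₁,0; 0,x₃,0,0,0; 0,0,x₃,0,-x₁; 0,0,0,x₃,0; 0,0,0,0,x₃] := by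
    ext i j
    fin_cases i <;> fin_cases j <;> rfl
  rw [this]
  simp [Matrix.det_succ_row_zero, Fin.sum_univ_succ]
  ring

lemma rank_le5 (x₁ x₂ x₃ : ℂ) (h : ¬(x₁ = 0 ∧ x₂ = 0 ∧ x₃ = 0)) :
    (M x₁ x₂ x₃).rank ≤ 5 := by
  rw [← Matrix.rank_transpose]
  set f := Matrix.mulVecLin (M x₁ x₂ x₃).transpose with hf
  have hrn : Module.finrank ℂ (LinearMap.range f) + Module.finrank ℂ (LinearMap.ker f) = 6 := by
    rw [LinearMap.finrank_range_add_finrank_ker]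
    simp
  have hker : 0 < Module.finrank ℂ (LinearMap.ker f) := by
    rw [Module.finrank_pos_iff_exists_ne_zero]
    refine ⟨⟨![x₃^2, -(x₂*x₃), x₂^2, x₁*x₃, -(x₁*x₂), x₁^2], ?_⟩, ?_⟩
    · rw [LinearMap.mem_ker, hf, Matrix.mulVecLin_transpose, Matrix.vecMulLinear_apply]
      ext i
      fin_cases i <;>
        (simp [Matrix.vecMul, dotProduct, Fin.sum_univ_succ, M]; try ring)
    · intro hw
      rw [Submodule.mk_eq_zero] at hw
      apply h
      have h0 : x₃^2 = 0 := congrFun hw 0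
      have h2 : x₂^2 = 0 := congrFun hw 2
      have h5 : x₁^2 = 0 := congrFun hw 5
      exact ⟨by simpa using pow_eq_zero_iff two_ne_zero |>.1 h5,
             by simpa using pow_eq_zero_iff two_ne_zero |>.1 h2,
             by simpa using pow_eq_zero_iff two_ne_zero |>.1 h0⟩
  have hr : (M x₁ x₂ x₃).transpose.rank = Module.finrank ℂ (LinearMap.range f) := rfl
  omega

theorem stmt15 (x₁ x₂ x₃ : ℂ) (h : ¬(x₁ = 0 ∧ x₂ = 0 ∧ x₃ = 0)) :
    (M x₁ x₂ x₃).rank = 5 := by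
  have hub := rank_le5 x₁ x₂ x₃ h
  have hlb : 5 ≤ (M x₁ x₂ x₃).rank := by
    by_cases h1 : x₁ = 0
    · by_cases h2 : x₂ = 0
      · have h3 : x₃ ≠ 0 := fun h3 => h ⟨h1, h2, h3⟩
        exact rank_ge_of_det ![1,2,3,4,5] ![0,1,2,3,6]
          (by rw [det3]; exact pow_ne_zero 5 h3)
      · exact rank_ge_of_det ![0,1,3,4,5] ![0,1,4,5,7]
          (by rw [det2]; simpa using pow_ne_zero 5 h2)
    · exact rank_ge_of_det ![0,1,2,3,4] ![2,3,5,6,7]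
        (by rw [det1]; simpa using pow_ne_zero 5 h1)
  omega
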